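/- For all α > 0, β > 0, c > 0, u > 0 and 0 < v < t: ∫_v^t ((u+cv)/(u+cz)) · e^{−β(u+cz)} · Σ_{n=1}^∞ [(β(u+cz))^n/n!] · [α(α(z−v))^{n−1}/(n−1)!] · e^{−α(z−v)} dz = √(βαc) · (v + u/c) · e^{−βu} · e^{−βcv} · ∫₀^{t−v} [I₁(2√(βαc·(y + v + u/c)·y)) / √((y + v + u/c)·y)] · e^{−(βc+α)y} dy. (In the renewal model with inter-arrival times T exponential with parameter α and jump sizes Y exponential with parameter β, the left-hand side equals the conditional probability P{v < τ ≤ t | T₁ = v} of first crossing of the level u + cs by the compound renewal process before time t.) -/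

import Mathlib

open MeasureTheory Real

/-- Modified Bessel function of the first kind of order 1:
`I₁(w) = Σ_{k≥0} (w/2)^{2k+1}/(k!·(k+1)!)`. -/
noncomputable def besselI1 (w : ℝ) : ℝ :=
  ∑' k : ℕ, (w / 2) ^ (2 * k + 1) / ((k.factorial : ℝ) * ((k + 1).factorial : ℝ))

lemma key_pointwise (α β c u v : ℝ) (hα : 0 < α) (hβ : 0 < β) (hc : 0 < c)
    (hu : 0 < u) (hv : 0 < v) (y : ℝ) (hy : 0 < y) :
    (u + c * v) / (u + c * (y + v)) * Real.exp (-(β * (u + c * (y + v)))) *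
      ∑' n : ℕ,
        (β * (u + c * (y + v))) ^ (n + 1) / ((n + 1).factorial : ℝ) *
          (α * (α * ((y + v) - v)) ^ n / (n.factorial : ℝ)) *
          Real.exp (-(α * ((y + v) - v)))
    = Real.sqrt (β * α * c) * (v + u / c) * Real.exp (-(β * u)) * Real.exp (-(β * c * v)) *
        (besselI1 (2 * Real.sqrt (β * α * c * (y + v + u / c) * y)) /
            Real.sqrt ((y + v + u / c) * y) *
          Real.exp (-((β * c + α) * y))) := by
  set A : ℝ := y + v + u / c with hAdef
  have hA : 0 < A := by positivity
  set s : ℝ := β * α * c * A * y with hsdef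
  have hs : 0 < s := by positivity
  have hcA : u + c * (y + v) = c * A := by rw [hAdef]; field_simp; ring
  -- Bessel rewrite
  have hbessel : besselI1 (2 * Real.sqrt s)
      = Real.sqrt s * ∑' k : ℕ, s ^ k / ((k.factorial : ℝ) * ((k + 1).factorial : ℝ)) := by
    unfold besselI1
    rw [← tsum_mul_left]
    apply tsum_congr
    intro k
    have h2 : 2 * Real.sqrt s / 2 = Real.sqrt s := by ring
    rw [h2, pow_add, pow_mul, pow_one, Real.sq_sqrt hs.le]
    ring
  -- LHS series rewrite
  have hterm : ∀ n : ℕ,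
      (β * (u + c * (y + v))) ^ (n + 1) / ((n + 1).factorial : ℝ) *
          (α * (α * ((y + v) - v)) ^ n / (n.factorial : ℝ)) *
          Real.exp (-(α * ((y + v) - v)))
      = (β * c * A * α * Real.exp (-(α * y))) *
          (s ^ n / ((n.factorial : ℝ) * ((n + 1).factorial : ℝ))) := by
    intro n
    have hyv : (y + v) - v = y := by ring
    have hpow : s ^ n = (β * (c * A)) ^ n * (α * y) ^ n := by
      rw [← mul_pow, hsdef]; ring_nf
    rw [hcA, hyv, hpow, pow_succ]
    have h1 : ((n + 1).factorial : ℝ) ≠ 0 := Nat.cast_ne_zero.mpr (Nat.factorial_ne_zero _)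
    have h2 : ((n).factorial : ℝ) ≠ 0 := Nat.cast_ne_zero.mpr (Nat.factorial_ne_zero _)
    field_simp
  rw [tsum_congr hterm, tsum_mul_left, hcA, hbessel]
  have hsqrts : Real.sqrt s = Real.sqrt (β * α * c) * Real.sqrt (A * y) := by
    rw [← Real.sqrt_mul (by positivity), hsdef]; ring_nf
  have hr : Real.sqrt (A * y) ≠ 0 := by positivity
  have hq : Real.sqrt (β * α * c) * Real.sqrt (β * α * c) = β * α * c :=
    Real.mul_self_sqrt (by positivity)
  rw [hsqrts]
  set S := ∑' k : ℕ, s ^ k / ((k.factorial : ℝ) * ((k + 1).factorial : ℝ)) with hS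
  set e1 := Real.exp (-(β * (c * A))) with he1
  set e2 := Real.exp (-(α * y)) with he2
  set e3 := Real.exp (-(β * u)) with he3
  set e4 := Real.exp (-(β * c * v)) with he4
  set e5 := Real.exp (-((β * c + α) * y)) with he5
  have hE : e1 * e2 = e3 * e4 * e5 := by
    rw [he1, he2, he3, he4, he5, ← Real.exp_add, ← Real.exp_add, ← Real.exp_add]
    congr 1
    rw [hAdef]; field_simp; ring
  have hcA0 : c * A ≠ 0 := by positivity
  calc (u + c * v) / (c * A) * e1 * (β * c * A * α * e2 * S)
      = (u + c * v) * β * α * S * (e1 * e2) := by field_simp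
    _ = (u + c * v) * β * α * S * (e3 * e4 * e5) := by rw [hE]
    _ = Real.sqrt (β * α * c) * (v + u / c) * e3 * e4 *
          (Real.sqrt (β * α * c) * Real.sqrt (A * y) * S / Real.sqrt (A * y) * e5) := by
        have h0 : Real.sqrt (A * y) * (S / Real.sqrt (A * y)) = S := by
          field_simp
        rw [mul_div_assoc, mul_assoc (Real.sqrt (β * α * c)) (Real.sqrt (A * y))
          (S / Real.sqrt (A * y)), h0]
        have h9 : (u + c * v) = c * (v + u / c) := by field_simp; ring
        linear_combination (-((v + u / c) * e3 * e4 * S * e5)) * hq +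
          (β * α * S * (e3 * e4 * e5)) * h9

/-- Closed form, in terms of `I₁`, of the conditional probability
`P{v < τ ≤ t | T₁ = v}` of first level crossing for exponential inter-arrival
times (parameter `α`) and exponential jumps (parameter `β`). -/
theorem first_crossing_exponential (α β c u v t : ℝ)
    (hα : 0 < α) (hβ : 0 < β) (hc : 0 < c) (hu : 0 < u) (hv : 0 < v) (hvt : v < t) :
    (∫ z in v..t,
        (u + c * v) / (u + c * z) * Real.exp (-(β * (u + c * z))) *
          ∑' n : ℕ,
            (β * (u + c * z)) ^ (n + 1) / ((n + 1).factorial : ℝ) *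
              (α * (α * (z - v)) ^ n / (n.factorial : ℝ)) *
              Real.exp (-(α * (z - v))))
      = Real.sqrt (β * α * c) * (v + u / c) * Real.exp (-(β * u)) * Real.exp (-(β * c * v)) *
          ∫ y in (0:ℝ)..(t - v),
            besselI1 (2 * Real.sqrt (β * α * c * (y + v + u / c) * y))
                / Real.sqrt ((y + v + u / c) * y) *
              Real.exp (-((β * c + α) * y)) := by
  rw [← intervalIntegral.integral_const_mul]
  have hsub := intervalIntegral.integral_comp_add_right (a := (0:ℝ)) (b := t - v)
    (fun z => (u + c * v) / (u + c * z) * Real.exp (-(β * (u + c * z))) *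
      ∑' n : ℕ,
        (β * (u + c * z)) ^ (n + 1) / ((n + 1).factorial : ℝ) *
          (α * (α * (z - v)) ^ n / (n.factorial : ℝ)) *
          Real.exp (-(α * (z - v)))) v
  simp only [zero_add, sub_add_cancel] at hsub
  rw [← hsub]
  apply intervalIntegral.integral_congr_ae
  filter_upwards with y hy
  rw [Set.uIoc_of_le (by linarith : (0:ℝ) ≤ t - v)] at hy
  exact key_pointwise α β c u v hα hβ hc hu hv y hy.1
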